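/- Let F and Ǧ be asymmetric norms on ℝⁿ such that F is strongly convex with respect to Ǧ, and suppose the function α ↦ F_*(α)² is differentiable on all of ℝⁿ. Then the gradient map α ↦ ∇(F_*²)(α) is Lipschitz: there exists a constant L > 0 such that ‖∇(F_*²)(α₁) − ∇(F_*²)(α₂)‖ ≤ L‖α₁ − α₂‖ for all α₁, α₂ ∈ ℝⁿ, where ‖·‖ is the Euclidean norm. -/

import Mathlib

open scoped RealInnerProductSpace

/-- `ℝⁿ` with the Euclidean inner product. -/
abbrev En (n : ℕ) := EuclideanSpace ℝ (Fin n)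

/-- An asymmetric norm on `ℝⁿ`. -/
def IsAsymNorm {n : ℕ} (F : En n → ℝ) : Prop :=
  (∀ y, 0 ≤ F y) ∧ (∀ y, F y = 0 ↔ y = 0) ∧
  (∀ l : ℝ, 0 < l → ∀ y, F (l • y) = l * F y) ∧
  (∀ y₁ y₂, F (y₁ + y₂) ≤ F y₁ + F y₂)

/-- The dual asymmetric norm `F_*(α) = sup {⟨α, y⟩ : F y ≤ 1}`. -/
noncomputable def dualNorm {n : ℕ} (F : En n → ℝ) (α : En n) : ℝ :=
  sSup ((fun y => ⟪α, y⟫) '' {y | F y ≤ 1})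

/-- The subdifferential of `F²` at `y`. -/
def subdiffSq {n : ℕ} (F : En n → ℝ) (y : En n) : Set (En n) :=
  {α | ∀ z, (F y) ^ 2 + ⟪α, z - y⟫ ≤ (F z) ^ 2}


set_option linter.deprecated false

section Aux

variable {n : ℕ} {F : En n → ℝ}

lemma asym_zero (hF : IsAsymNorm F) : F 0 = 0 := (hF.2.1 0).mpr rfl

lemma asym_convexOn (hF : IsAsymNorm F) : ConvexOn ℝ Set.univ F := by
  refine ⟨convex_univ, fun x _ y _ a b ha hb hab => ?_⟩
  rcases ha.eq_or_lt with h0 | ha'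
  · have hb1 : b = 1 := by linarith
    simp [← h0, hb1]
  rcases hb.eq_or_lt with h0 | hb'
  · have ha1 : a = 1 := by linarith
    simp [← h0, ha1]
  calc F (a • x + b • y) ≤ F (a • x) + F (b • y) := hF.2.2.2 _ _
    _ = a * F x + b * F y := by rw [hF.2.2.1 a ha' x, hF.2.2.1 b hb' y]

lemma asym_continuous (hF : IsAsymNorm F) : Continuous F := by
  have h := (asym_convexOn hF).continuousOn isOpen_univ
  rwa [← continuousOn_univ]

lemma asym_lower (hF : IsAsymNorm F) : ∃ c > (0:ℝ), ∀ y, c * ‖y‖ ≤ F y := by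
  by_cases hn : ∀ y : En n, y = 0
  · exact ⟨1, one_pos, fun y => by simp [hn y, asym_zero hF]⟩
  push_neg at hn
  obtain ⟨y₀, hy₀⟩ := hn
  have hsne : (Metric.sphere (0 : En n) 1).Nonempty := by
    refine ⟨‖y₀‖⁻¹ • y₀, ?_⟩
    have h0 : ‖y₀‖ ≠ 0 := norm_ne_zero_iff.mpr hy₀
    simp [norm_smul, abs_of_nonneg (norm_nonneg y₀), inv_mul_cancel₀ h0]
  obtain ⟨m, hm, hmin⟩ := (isCompact_sphere (0 : En n) 1).exists_isMinOn hsne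
    (asym_continuous hF).continuousOn
  have hmnorm : ‖m‖ = 1 := by simpa using hm
  have hmne : m ≠ 0 := by
    intro h; rw [h] at hmnorm; simp at hmnorm
  have hc : 0 < F m := lt_of_le_of_ne (hF.1 m) (fun h => hmne ((hF.2.1 m).mp h.symm))
  refine ⟨F m, hc, fun y => ?_⟩
  rcases eq_or_ne y 0 with rfl | hy
  · simp [asym_zero hF]
  have hny : (0:ℝ) < ‖y‖ := norm_pos_iff.mpr hy
  have hu : (‖y‖⁻¹ • y) ∈ Metric.sphere (0 : En n) 1 := by
    simp [norm_smul, abs_of_nonneg (norm_nonneg y), inv_mul_cancel₀ hny.ne']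
  have h1 : F m ≤ F (‖y‖⁻¹ • y) := hmin hu
  have h2 : F y = ‖y‖ * F (‖y‖⁻¹ • y) := by
    rw [← hF.2.2.1 ‖y‖ hny, smul_smul, mul_inv_cancel₀ hny.ne', one_smul]
  rw [h2]
  nlinarith

end Aux

section Dual

variable {n : ℕ} {F : En n → ℝ}

lemma dual_bddAbove (hF : IsAsymNorm F) (α : En n) :
    BddAbove ((fun y => ⟪α, y⟫) '' {y | F y ≤ 1}) := by
  obtain ⟨c, hc, hlow⟩ := asym_lower hF
  refine ⟨‖α‖ * (1/c), ?_⟩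
  rintro _ ⟨y, hy, rfl⟩
  have h1 : ‖y‖ ≤ 1/c := by
    rw [le_div_iff₀ hc]
    have := hlow y
    have hy' : F y ≤ 1 := hy
    linarith [mul_comm c ‖y‖]
  calc ⟪α, y⟫ ≤ ‖α‖ * ‖y‖ := real_inner_le_norm α y
    _ ≤ ‖α‖ * (1/c) := by
        exact mul_le_mul_of_nonneg_left h1 (norm_nonneg α)

lemma dual_mem (hF : IsAsymNorm F) (α y : En n) (hy : F y ≤ 1) :
    ⟪α, y⟫ ≤ dualNorm F α :=
  le_csSup (dual_bddAbove hF α) ⟨y, hy, rfl⟩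

lemma dual_nonneg (hF : IsAsymNorm F) (α : En n) : 0 ≤ dualNorm F α := by
  have := dual_mem hF α 0 (by simp [asym_zero hF])
  simpa using this

lemma inner_le_dual (hF : IsAsymNorm F) (α z : En n) :
    ⟪α, z⟫ ≤ F z * dualNorm F α := by
  rcases eq_or_ne z 0 with rfl | hz
  · simp [asym_zero hF]
  have hFz : 0 < F z := lt_of_le_of_ne (hF.1 z) (fun h => hz ((hF.2.1 z).mp h.symm))
  have hu : F ((F z)⁻¹ • z) ≤ 1 := by
    rw [hF.2.2.1 _ (inv_pos.mpr hFz), inv_mul_cancel₀ hFz.ne']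
  have h1 := dual_mem hF α _ hu
  rw [real_inner_smul_right] at h1
  calc ⟪α, z⟫ = F z * ((F z)⁻¹ * ⟪α, z⟫) := by field_simp
    _ ≤ F z * dualNorm F α := mul_le_mul_of_nonneg_left h1 hFz.le

lemma phi_le (hF : IsAsymNorm F) (α z : En n) :
    ⟪α, z⟫ - (F z) ^ 2 ≤ (dualNorm F α) ^ 2 / 4 := by
  have h1 := inner_le_dual hF α z
  nlinarith [sq_nonneg (F z - dualNorm F α / 2)]

lemma dual_attained (hF : IsAsymNorm F) (α : En n) :
    ∃ y, F y ≤ 1 ∧ ⟪α, y⟫ = dualNorm F α := by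
  obtain ⟨c, hc, hlow⟩ := asym_lower hF
  have hKcl : IsClosed {y : En n | F y ≤ 1} :=
    isClosed_le (asym_continuous hF) continuous_const
  have hKbd : Bornology.IsBounded {y : En n | F y ≤ 1} := by
    refine (Metric.isBounded_iff_subset_closedBall 0).mpr ⟨1/c, fun y hy => ?_⟩
    have hy' : F y ≤ 1 := hy
    have := hlow y
    simp only [Metric.mem_closedBall, dist_zero_right]
    rw [le_div_iff₀ hc]; linarith [mul_comm c ‖y‖]
  have hK : IsCompact {y : En n | F y ≤ 1} :=
    Metric.isCompact_iff_isClosed_bounded.mpr ⟨hKcl, hKbd⟩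
  have hKne : {y : En n | F y ≤ 1}.Nonempty := ⟨0, by simp [asym_zero hF]⟩
  have hcont : Continuous fun y : En n => ⟪α, y⟫ := continuous_const.inner continuous_id
  obtain ⟨y, hy, hmax⟩ := hK.exists_isMaxOn hKne hcont.continuousOn
  refine ⟨y, hy, le_antisymm (dual_mem hF α y hy) ?_⟩
  refine csSup_le ⟨⟪α, 0⟫, 0, by simp [asym_zero hF], rfl⟩ ?_
  rintro _ ⟨z, hz, rfl⟩
  exact hmax hz

end Dual

section Support

variable {n : ℕ} {F : En n → ℝ}

lemma exists_support (hF : IsAsymNorm F) (α : En n) :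
    ∃ y, α ∈ subdiffSq F y ∧ ⟪α, y⟫ - (F y) ^ 2 = (dualNorm F α) ^ 2 / 4 := by
  obtain ⟨y₀, hy₀, hval⟩ := dual_attained hF α
  set s := dualNorm F α with hs
  have hs0 : 0 ≤ s := dual_nonneg hF α
  have hFy : F ((s/2) • y₀) ≤ s/2 := by
    rcases eq_or_lt_of_le hs0 with h | h
    · rw [← h]
      simp [asym_zero hF]
    · rw [hF.2.2.1 (s/2) (by linarith) y₀]
      nlinarith
  have hin : ⟪α, (s/2) • y₀⟫ = s^2/2 := by
    rw [real_inner_smul_right, hval]; ring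
  have hFy2 : (F ((s/2) • y₀))^2 ≤ s^2/4 := by nlinarith [hF.1 ((s/2) • y₀)]
  have hveq : ⟪α, (s/2) • y₀⟫ - (F ((s/2) • y₀)) ^ 2 = s ^ 2 / 4 := by
    have hle := phi_le hF α ((s/2) • y₀)
    rw [hin] at hle ⊢
    linarith
  refine ⟨(s/2) • y₀, fun z => ?_, hveq⟩
  have hz := phi_le hF α z
  rw [inner_sub_right]
  linarith

lemma grad_eq_support (hF : IsAsymNorm F) {gα α y : En n}
    (hg : HasGradientAt (fun β => (dualNorm F β) ^ 2) gα α)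
    (hval : ⟪α, y⟫ - (F y) ^ 2 = (dualNorm F α) ^ 2 / 4) :
    gα = (4:ℝ) • y := by
  set v : En n := (4:ℝ) • y with hv
  have hvw : ∀ w : En n, ⟪v, w⟫ = 4 * ⟪w, y⟫ := by
    intro w; rw [hv, real_inner_smul_left, real_inner_comm]
  have hlow : ∀ β : En n,
      (dualNorm F α)^2 - ⟪v, α⟫ ≤ (dualNorm F β)^2 - ⟪v, β⟫ := by
    intro β
    have h1 := phi_le hF β y
    rw [hvw β, hvw α]
    linarith
  have hfd1 : HasFDerivAt (fun β => (dualNorm F β) ^ 2)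
      (InnerProductSpace.toDual ℝ (En n) gα) α := hasGradientAt_iff_hasFDerivAt.mp hg
  have hfd2 : HasFDerivAt (fun β : En n => ⟪v, β⟫)
      (InnerProductSpace.toDual ℝ (En n) v) α := by
    have h := (InnerProductSpace.toDual ℝ (En n) v).hasFDerivAt (x := α)
    exact h
  have hψ : HasFDerivAt (fun β => (dualNorm F β) ^ 2 - ⟪v, β⟫)
      (InnerProductSpace.toDual ℝ (En n) gα - InnerProductSpace.toDual ℝ (En n) v) α :=
    hfd1.sub hfd2
  have hmin : IsLocalMin (fun β => (dualNorm F β) ^ 2 - ⟪v, β⟫) α :=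
    Filter.Eventually.of_forall fun β => hlow β
  have hzero := hmin.hasFDerivAt_eq_zero hψ
  have heq : InnerProductSpace.toDual ℝ (En n) gα = InnerProductSpace.toDual ℝ (En n) v := by
    rwa [sub_eq_zero] at hzero
  exact (InnerProductSpace.toDual ℝ (En n)).injective heq

end Support

/-- `F` is strongly convex with respect to `G`. -/
def StronglyConvexWrt {n : ℕ} (F G : En n → ℝ) : Prop :=
  ∀ y z α, α ∈ subdiffSq F y → (F y) ^ 2 + ⟪α, z - y⟫ + (G (z - y)) ^ 2 ≤ (F z) ^ 2

set_option maxHeartbeats 1000000 in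
/-- If `F` is strongly convex with respect to `G`, then the gradient of the squared
dual norm `F_*²` is (globally) Lipschitz. -/
theorem gradient_dual_sq_lipschitz {n : ℕ} (F G : En n → ℝ)
    (hF : IsAsymNorm F) (hG : IsAsymNorm G) (hsc : StronglyConvexWrt F G)
    (g : En n → En n)
    (hg : ∀ α, HasGradientAt (fun β => (dualNorm F β) ^ 2) (g α) α) :
    ∃ L > (0 : ℝ), ∀ α₁ α₂ : En n, ‖g α₁ - g α₂‖ ≤ L * ‖α₁ - α₂‖ := by
  obtain ⟨c, hc, hlow⟩ := asym_lower hG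
  refine ⟨2 / c ^ 2, by positivity, fun α₁ α₂ => ?_⟩
  obtain ⟨y₁, hsub₁, hval₁⟩ := exists_support hF α₁
  obtain ⟨y₂, hsub₂, hval₂⟩ := exists_support hF α₂
  have hg₁ : g α₁ = (4:ℝ) • y₁ := grad_eq_support hF (hg α₁) hval₁
  have hg₂ : g α₂ = (4:ℝ) • y₂ := grad_eq_support hF (hg α₂) hval₂
  have h1 := hsc y₁ y₂ α₁ hsub₁
  have h2 := hsc y₂ y₁ α₂ hsub₂
  have e1 : ⟪α₁, y₂ - y₁⟫ = ⟪α₁, y₂⟫ - ⟪α₁, y₁⟫ := inner_sub_right _ _ _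
  have e2 : ⟪α₂, y₁ - y₂⟫ = ⟪α₂, y₁⟫ - ⟪α₂, y₂⟫ := inner_sub_right _ _ _
  have hG1 : c * ‖y₂ - y₁‖ ≤ G (y₂ - y₁) := hlow _
  have hG2 : c * ‖y₁ - y₂‖ ≤ G (y₁ - y₂) := hlow _
  have hnrev : ‖y₂ - y₁‖ = ‖y₁ - y₂‖ := norm_sub_rev _ _
  have hGnn1 : 0 ≤ G (y₂ - y₁) := hG.1 _
  have hGnn2 : 0 ≤ G (y₁ - y₂) := hG.1 _
  have hnn : 0 ≤ ‖y₁ - y₂‖ := norm_nonneg _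
  have hsq1 : c ^ 2 * ‖y₁ - y₂‖ ^ 2 ≤ (G (y₂ - y₁)) ^ 2 := by
    have h := pow_le_pow_left₀ (by positivity) hG1 2
    rw [mul_pow, hnrev] at h; exact h
  have hsq2 : c ^ 2 * ‖y₁ - y₂‖ ^ 2 ≤ (G (y₁ - y₂)) ^ 2 := by
    have h := pow_le_pow_left₀ (by positivity) hG2 2
    rw [mul_pow] at h; exact h
  have hmono : 2 * c ^ 2 * ‖y₁ - y₂‖ ^ 2 ≤ ⟪α₁ - α₂, y₁ - y₂⟫ := by
    have e3 : ⟪α₁ - α₂, y₁ - y₂⟫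
        = (⟪α₁, y₁⟫ - ⟪α₁, y₂⟫) - (⟪α₂, y₁⟫ - ⟪α₂, y₂⟫) := by
      simp [inner_sub_left, inner_sub_right]; ring
    rw [e3]; rw [e1] at h1; rw [e2] at h2; linarith
  have hcs : ⟪α₁ - α₂, y₁ - y₂⟫ ≤ ‖α₁ - α₂‖ * ‖y₁ - y₂‖ := real_inner_le_norm _ _
  have hkey : 2 * c ^ 2 * ‖y₁ - y₂‖ ≤ ‖α₁ - α₂‖ := by
    rcases eq_or_lt_of_le hnn with h | h
    · rw [← h]; simpa using norm_nonneg (α₁ - α₂)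
    · nlinarith
  have hnorm : ‖g α₁ - g α₂‖ = 4 * ‖y₁ - y₂‖ := by
    rw [hg₁, hg₂, ← smul_sub, norm_smul]
    norm_num
  rw [hnorm, div_mul_eq_mul_div, le_div_iff₀ (by positivity)]
  nlinarith
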